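/- Let n and p be positive integers with n ≥ p+5, and let G be a graph of order n. If the complement of G has a connected component which is a cycle of length at least 4, then G contains the book B_p as a subgraph. -/

import Mathlib

open SimpleGraph

/-- A graph contains the book `B_p` iff some edge has at least `p` common neighbors. -/
def SimpleGraph.ContainsBook {V : Type*} (G : SimpleGraph V) (p : ℕ) : Prop :=
  ∃ x y, G.Adj x y ∧ p ≤ (G.commonNeighbors x y).ncard

/-- The Turán number `ex(n, B_p)`: the maximum number of edges of a simple graph
on `n` vertices containing no book `B_p`. -/
noncomputable def bookTuranNumber (n p : ℕ) : ℕ :=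
  sSup {e : ℕ | ∃ G : SimpleGraph (Fin n), ¬ G.ContainsBook p ∧ G.edgeSet.ncard = e}

/-- The disjoint union of `m` copies of the complete graph `K_k`. -/
def unionComplete (m k : ℕ) : SimpleGraph (Fin m × Fin k) :=
  SimpleGraph.fromRel fun a b => a.1 = b.1

/-- The join `G ∨ H` of two graphs. -/
def SimpleGraph.join {α β : Type*} (G : SimpleGraph α) (H : SimpleGraph β) :
    SimpleGraph (α ⊕ β) := (Gᶜ ⊕g Hᶜ)ᶜ

/-- A disjoint union of cycles `C_{i 0} + ⋯ + C_{i (t-1)}`. -/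
def cycleFamily (t : ℕ) (i : Fin t → ℕ) : SimpleGraph (Σ j : Fin t, Fin (i j)) :=
  SimpleGraph.fromRel fun a b => ∃ h : a.1 = b.1, (SimpleGraph.cycleGraph (i b.1)).Adj (h ▸ a.2) b.2

lemma cyc_adj_dest (m : ℕ) (a b : Fin (m+4)) (h : (cycleGraph (m+4)).Adj a b) :
    b = a + 1 ∨ b = a - 1 := by
  have h' := (cycleGraph_adj (n := m+2) (u := a) (v := b)).mp h
  rcases h' with h' | h'
  · right
    rw [eq_sub_iff_add_eq, ← h']; open Fin.CommRing in ring
  · left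
    rw [← h']; open Fin.CommRing in ring

lemma not_adj_02 (m : ℕ) : ¬ (cycleGraph (m+4)).Adj 0 2 := by
  intro h
  rcases cyc_adj_dest m 0 2 h with h' | h' <;>
  · rw [Fin.ext_iff] at h'
    simp [Fin.sub_def, Fin.add_def, Nat.mod_eq_of_lt (show 2 < m+4 by omega)] at h'

theorem stmt2 (n p : ℕ) (hp : 1 ≤ p) (hn : p + 5 ≤ n) {V : Type*} [Fintype V]
    (hV : Fintype.card V = n) (G : SimpleGraph V)
    (h : ∃ (k : ℕ) (s : Set V), 4 ≤ k ∧ (∀ x ∈ s, ∀ y, Gᶜ.Adj x y → y ∈ s) ∧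
      Nonempty (SimpleGraph.induce s Gᶜ ≃g SimpleGraph.cycleGraph k)) :
    G.ContainsBook p := by
  obtain ⟨k, s, hk, hclosed, ⟨e⟩⟩ := h
  obtain ⟨m, rfl⟩ : ∃ m, k = m + 4 := ⟨k - 4, by omega⟩
  set f : Fin (m+4) → V := fun i => (e.symm i : V) with hf
  have hfs : ∀ i, f i ∈ s := fun i => (e.symm i).2
  have hfinj : Function.Injective f := fun i j hij => by
    apply e.symm.injective; exact Subtype.ext hij
  have hadj : ∀ i j, Gᶜ.Adj (f i) (f j) ↔ (cycleGraph (m+4)).Adj i j := by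
    intro i j
    rw [← e.symm.map_adj_iff]
    exact Iff.rfl
  set x := f 0 with hx
  set y := f 2 with hy
  have hGadj : G.Adj x y := by
    rw [← compl_compl G, compl_adj]
    refine ⟨fun hxy => ?_, fun hc => not_adj_02 m ((hadj 0 2).mp hc)⟩
    have h02 : (0 : Fin (m+4)) = 2 := hfinj hxy
    rw [Fin.ext_iff] at h02
    simp [Nat.mod_eq_of_lt (show 2 < m+4 by omega)] at h02
  refine ⟨x, y, hGadj, ?_⟩
  set B : Set V := {x, y, f (0+1), f (0-1), f (2+1)} with hB
  have hsub : (G.commonNeighbors x y)ᶜ ⊆ B := by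
    intro z hz
    simp only [SimpleGraph.commonNeighbors, Set.mem_compl_iff, Set.mem_inter_iff,
      SimpleGraph.mem_neighborSet, not_and_or] at hz
    have key : ∀ w : Fin (m+4), ¬ G.Adj (f w) z → z = f w ∨ z = f (w+1) ∨ z = f (w-1) := by
      intro w hw
      by_cases hzw : z = f w
      · exact Or.inl hzw
      have hcadj : Gᶜ.Adj (f w) z := by
        rw [compl_adj]
        exact ⟨fun hh => hzw hh.symm, hw⟩
      have hzs : z ∈ s := hclosed (f w) (hfs w) z hcadj
      obtain ⟨j, hj⟩ : ∃ j, f j = z := ⟨e ⟨z, hzs⟩, by simp [hf]⟩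
      have hcyc : (cycleGraph (m+4)).Adj w j := (hadj w j).mp (hj ▸ hcadj)
      rcases cyc_adj_dest m w j hcyc with h' | h'
      · exact Or.inr (Or.inl (by rw [← hj, h']))
      · exact Or.inr (Or.inr (by rw [← hj, h']))
    rcases hz with hz | hz
    · rcases key 0 hz with h' | h' | h'
      · exact Or.inl h'
      · exact Or.inr (Or.inr (Or.inl h'))
      · exact Or.inr (Or.inr (Or.inr (Or.inl h')))
    · rcases key 2 hz with h' | h' | h'
      · exact Or.inr (Or.inl h')
      · exact Or.inr (Or.inr (Or.inr (Or.inr h')))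
      · have h21 : (2 : Fin (m+4)) - 1 = 0 + 1 := by open Fin.CommRing in ring
        rw [h21] at h'
        exact Or.inr (Or.inr (Or.inl h'))
  have hB5 : B.ncard ≤ 5 := by
    rw [hB]
    calc ({x, y, f (0+1), f (0-1), f (2+1)} : Set V).ncard
        ≤ ({y, f (0+1), f (0-1), f (2+1)} : Set V).ncard + 1 := Set.ncard_insert_le _ _
      _ ≤ (({f (0+1), f (0-1), f (2+1)} : Set V).ncard + 1) + 1 :=
          Nat.add_le_add_right (Set.ncard_insert_le _ _) 1
      _ ≤ ((({f (0-1), f (2+1)} : Set V).ncard + 1) + 1) + 1 :=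
          Nat.add_le_add_right (Nat.add_le_add_right (Set.ncard_insert_le _ _) 1) 1
      _ ≤ (((({f (2+1)} : Set V).ncard + 1) + 1) + 1) + 1 :=
          Nat.add_le_add_right (Nat.add_le_add_right (Nat.add_le_add_right (Set.ncard_insert_le _ _) 1) 1) 1
      _ ≤ 5 := by rw [Set.ncard_singleton]
  have hCle : ((G.commonNeighbors x y)ᶜ).ncard ≤ 5 :=
    le_trans (Set.ncard_le_ncard hsub (Set.toFinite _)) hB5
  have hsum := Set.ncard_add_ncard_compl (G.commonNeighbors x y)
  rw [Nat.card_eq_fintype_card, hV] at hsum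
  omega
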